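/- Coefficient-of-variation bound for the PPS estimator: if W ≥ k·τ for a real k > 0, then Var(Y) ≤ W²/k, i.e., the coefficient of variation √Var(Y)/W is at most 1/√k. -/

import Mathlib

open scoped BigOperators
open MeasureTheory

open ProbabilityTheory in
lemma variance_const_add_aux {Ω : Type*} [MeasurableSpace Ω] (μ : Measure Ω)
    [IsProbabilityMeasure μ] (c : ℝ) (X : Ω → ℝ) (hX : Integrable X μ) :
    variance (fun ω => c + X ω) μ = variance X μ := by
  have hint : (∫ ω, (c + X ω) ∂μ) = c + ∫ ω, X ω ∂μ := by
    rw [integral_add (integrable_const c) hX, integral_const, probReal_univ,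
      smul_eq_mul, one_mul]
  rw [ProbabilityTheory.variance, ProbabilityTheory.variance,
    ProbabilityTheory.evariance, ProbabilityTheory.evariance]
  congr 1
  apply lintegral_congr
  intro ω
  have : c + X ω - ∫ ω, (c + X ω) ∂μ = X ω - ∫ ω, X ω ∂μ := by
    rw [hint]; ring
  simp only [this]

/-- Coefficient-of-variation bound for the PPS estimator:
if `W ≥ k·τ` for a real `k > 0`, then `Var(Y) ≤ W²/k`, i.e., the coefficient
of variation `√Var(Y)/W` is at most `1/√k`. Here
`Y = ∑_{i : w_i ≥ τ} w_i + τ·|{i : w_i < τ ∧ r_i ≤ w_i/τ}|`, `W = ∑ᵢ w_i`,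
and `r₁,…,r_m` are i.i.d. uniform on `[0,1]`. -/
theorem pps_estimator_cv_bound
    {Ω : Type*} [MeasurableSpace Ω] (μ : Measure Ω) [IsProbabilityMeasure μ]
    (m : ℕ) (w : Fin m → ℝ) (hw : ∀ i, 0 ≤ w i)
    (τ : ℝ) (hτ : 0 < τ)
    (r : Fin m → Ω → ℝ)
    (hr_meas : ∀ i, Measurable (r i))
    (hr_indep : ProbabilityTheory.iIndepFun r μ)
    (hr_unif : ∀ i, Measure.map (r i) μ = volume.restrict (Set.Icc (0 : ℝ) 1))
    (Y : Ω → ℝ)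
    (hY : ∀ ω, Y ω = (∑ i ∈ Finset.univ.filter (fun i => τ ≤ w i), w i)
        + τ * ((Finset.univ.filter (fun i => w i < τ ∧ r i ω ≤ w i / τ)).card : ℝ))
    (k : ℝ) (hk : 0 < k) (hW : k * τ ≤ ∑ i, w i) :
    ProbabilityTheory.variance Y μ ≤ (∑ i, w i) ^ 2 / k
      ∧ Real.sqrt (ProbabilityTheory.variance Y μ) / (∑ i, w i)
          ≤ 1 / Real.sqrt k := by
  classical
  set W := ∑ i, w i with hWdef
  have hWpos : 0 < W := lt_of_lt_of_le (by positivity) hW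
  -- indicator-type random variables
  set g : Fin m → ℝ → ℝ := fun i x => if w i < τ ∧ x ≤ w i / τ then τ else 0 with hg
  set X : Fin m → Ω → ℝ := fun i ω => g i (r i ω) with hXdef
  have hgmeas : ∀ i, Measurable (g i) := by
    intro i
    by_cases h : w i < τ
    · have : g i = (Set.Iic (w i / τ)).indicator (fun _ => τ) := by
        ext x; simp [hg, Set.indicator, Set.mem_Iic, h]
      rw [this]
      exact measurable_const.indicator measurableSet_Iic
    · have : g i = fun _ => 0 := by
        ext x; simp [hg, h]
      rw [this]; exact measurable_const
  have hXmeas : ∀ i, Measurable (X i) := fun i => (hgmeas i).comp (hr_meas i)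
  have hXmem : ∀ i, MemLp (X i) 2 μ := by
    intro i
    refine memLp_of_bounded (a := 0) (b := τ) (Filter.Eventually.of_forall fun ω => ?_)
      (hXmeas i).aestronglyMeasurable 2
    simp only [hXdef, hg, Set.mem_Icc]
    split <;> constructor <;> simp [le_of_lt hτ]
  -- Y is a constant plus the sum of X i
  have hYeq : Y = fun ω => (∑ i ∈ Finset.univ.filter (fun i => τ ≤ w i), w i)
      + (∑ i, X i) ω := by
    funext ω
    rw [hY ω]
    congr 1
    rw [Finset.sum_apply]
    simp only [hXdef, hg]
    rw [Finset.sum_ite, Finset.sum_const, Finset.sum_const, smul_zero, add_zero,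
      nsmul_eq_mul, mul_comm]
  have hindep : ProbabilityTheory.iIndepFun X μ :=
    hr_indep.comp g hgmeas
  have hsum_mem : MemLp (∑ i, X i) 2 μ := memLp_finsetSum' _ (fun i _ => hXmem i)
  have hvar_eq : ProbabilityTheory.variance Y μ
      = ∑ i, ProbabilityTheory.variance (X i) μ := by
    rw [hYeq, variance_const_add_aux μ _ _ (hsum_mem.integrable one_le_two)]
    exact ProbabilityTheory.IndepFun.variance_sum (fun i _ => hXmem i)
      (fun i _ j _ hij => hindep.indepFun hij)
  -- bound each variance
  have hvar_i : ∀ i, ProbabilityTheory.variance (X i) μ ≤ τ * w i := by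
    intro i
    by_cases h : w i < τ
    · have hp0 : 0 ≤ w i / τ := div_nonneg (hw i) hτ.le
      have hp1 : w i / τ ≤ 1 := by
        rw [div_le_one hτ]; exact h.le
      set A : Set Ω := r i ⁻¹' Set.Iic (w i / τ) with hA
      have hAmeas : MeasurableSet A := (hr_meas i) measurableSet_Iic
      have hμA : μ A = ENNReal.ofReal (w i / τ) := by
        rw [hA, ← Measure.map_apply (hr_meas i) measurableSet_Iic, hr_unif i,
          Measure.restrict_apply measurableSet_Iic]
        have hset : Set.Iic (w i / τ) ∩ Set.Icc (0:ℝ) 1 = Set.Icc 0 (w i / τ) := by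
          ext x
          simp only [Set.mem_inter_iff, Set.mem_Iic, Set.mem_Icc]
          constructor
          · rintro ⟨h1, h2, h3⟩; exact ⟨h2, h1⟩
          · rintro ⟨h1, h2⟩; exact ⟨h2, h1, h2.trans hp1⟩
        rw [hset, Real.volume_Icc, sub_zero]
      have hXsq : (X i) ^ 2 = A.indicator (fun _ => τ ^ 2) := by
        funext ω
        simp only [Pi.pow_apply, hXdef, hg, hA, Set.indicator, Set.mem_preimage, Set.mem_Iic, h,
          true_and]
        split <;> simp
      calc ProbabilityTheory.variance (X i) μ ≤ ∫ ω, ((X i) ^ 2) ω ∂μ :=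
            ProbabilityTheory.variance_le_expectation_sq (hXmeas i).aestronglyMeasurable
        _ = τ * w i := by
            rw [hXsq]
            rw [integral_indicator_const _ hAmeas, Measure.real, hμA, smul_eq_mul,
              ENNReal.toReal_ofReal hp0]
            field_simp
    · have : X i = (0 : Ω → ℝ) := by
        funext ω; simp [hXdef, hg, h]
      rw [this, ProbabilityTheory.variance_zero]
      have := hw i
      positivity
  have hvar_le : ProbabilityTheory.variance Y μ ≤ τ * W := by
    rw [hvar_eq, hWdef, Finset.mul_sum]
    exact Finset.sum_le_sum fun i _ => hvar_i i
  have h1 : ProbabilityTheory.variance Y μ ≤ W ^ 2 / k := by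
    refine hvar_le.trans ?_
    rw [le_div_iff₀ hk]
    nlinarith
  refine ⟨h1, ?_⟩
  have hsq : Real.sqrt (ProbabilityTheory.variance Y μ) ≤ W / Real.sqrt k := by
    have : Real.sqrt (W ^ 2 / k) = W / Real.sqrt k := by
      rw [Real.sqrt_div (sq_nonneg W), Real.sqrt_sq hWpos.le]
    rw [← this]
    exact Real.sqrt_le_sqrt h1
  have hks : 0 < Real.sqrt k := Real.sqrt_pos.mpr hk
  calc Real.sqrt (ProbabilityTheory.variance Y μ) / W ≤ (W / Real.sqrt k) / W := by
        gcongr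
    _ = 1 / Real.sqrt k := by
        field_simp
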